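/- arXiv:2105.02601 — 4 statements merged into one kernel-verified Lean document; each statement's English description precedes it below -/
import Mathlib

section
/- Let F_2 be the field with two elements and let R = F_2[h0, h1, v, w1]/(h0·h1, h1^3, h1·v, v^2 + h0^2·w1). Then R is a free module over the polynomial subring F_2[w1], with basis given by the images of the monomials {h0^i : i ≥ 0} ∪ {h1, h1^2} ∪ {v·h0^i : i ≥ 0}. -/
set_option synthInstance.maxHeartbeats 1000000
set_option maxHeartbeats 1000000

noncomputable section

open MvPolynomial

abbrev F2 := ZMod 2

/-- The polynomial ring `F₂[h₀, h₁, v, w₁]`. -/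
abbrev KOP := MvPolynomial (Fin 4) F2

def h0 : KOP := X 0
def h1 : KOP := X 1
def vP : KOP := X 2
def w1 : KOP := X 3

def koExtIdeal : Ideal KOP :=
  Ideal.span {h0 * h1, h1 ^ 3, h1 * vP, vP ^ 2 + h0 ^ 2 * w1}

/-- `R = F₂[h₀, h₁, v, w₁]/(h₀h₁, h₁³, h₁v, v² + h₀²w₁) ≅ Ext_{A(1)}(F₂, F₂)`. -/
abbrev KOExt := KOP ⧸ koExtIdeal

def mkKO : KOP →+* KOExt := Ideal.Quotient.mk koExtIdeal

/-- `R` as a module over `F₂[w₁]`, via `X ↦ w₁`. -/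
instance : Module (Polynomial F2) KOExt :=
  RingHom.toModule (Polynomial.aeval (mkKO w1)).toRingHom

/-! ### Auxiliary development -/

/-- Index type for the basis. -/
abbrev KOIdx := ℕ ⊕ (Fin 2 ⊕ ℕ)

/-- The free module. -/
abbrev KOM := KOIdx →₀ Polynomial F2

/-- The claimed basis elements. -/
def elt : KOIdx → KOExt
  | Sum.inl i => mkKO (h0 ^ i)
  | Sum.inr (Sum.inl j) => mkKO (h1 ^ ((j : ℕ) + 1))
  | Sum.inr (Sum.inr i) => mkKO (vP * h0 ^ i)

/-- Normal form of a monomial exponent. -/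
def nf (e : Fin 4 →₀ ℕ) : KOM :=
  if e 1 = 0 then
    if e 2 % 2 = 0 then
      Finsupp.single (Sum.inl (e 0 + 2 * (e 2 / 2))) (Polynomial.X ^ (e 3 + e 2 / 2))
    else
      Finsupp.single (Sum.inr (Sum.inr (e 0 + 2 * (e 2 / 2)))) (Polynomial.X ^ (e 3 + e 2 / 2))
  else if e 0 = 0 ∧ e 2 = 0 then
    if e 1 = 1 then Finsupp.single (Sum.inr (Sum.inl 0)) (Polynomial.X ^ e 3)
    else if e 1 = 2 then Finsupp.single (Sum.inr (Sum.inl 1)) (Polynomial.X ^ e 3)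
    else 0
  else 0

/-- `ψ₀ : KOP →ₗ[F2] KOM` sending each monomial to its normal form. -/
def psi0 : KOP →ₗ[F2] KOM := (MvPolynomial.basisMonomials (Fin 4) F2).constr F2 nf

lemma psi0_monomial (e : Fin 4 →₀ ℕ) : psi0 (monomial e 1) = nf e := by
  have := (MvPolynomial.basisMonomials (Fin 4) F2).constr_basis F2 nf e
  rwa [MvPolynomial.coe_basisMonomials] at this


lemma mon_mul_mon (e f : Fin 4 →₀ ℕ) :
    monomial e (1 : F2) * monomial f 1 = monomial (e + f) 1 := by
  rw [monomial_mul, one_mul]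

lemma h0_mul_h1_eq : h0 * h1 = monomial (Finsupp.single 0 1 + Finsupp.single 1 1) (1 : F2) := by
  rw [h0, h1, X, X, mon_mul_mon]

lemma h1_cube_eq : h1 ^ 3 = monomial (Finsupp.single 1 3) (1 : F2) := by
  rw [h1, X_pow_eq_monomial]

lemma h1_mul_v_eq : h1 * vP = monomial (Finsupp.single 1 1 + Finsupp.single 2 1) (1 : F2) := by
  rw [h1, vP, X, X, mon_mul_mon]

lemma v_sq_eq : vP ^ 2 = monomial (Finsupp.single 2 2) (1 : F2) := by
  rw [vP, X_pow_eq_monomial]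

lemma h0sq_w1_eq : h0 ^ 2 * w1 = monomial (Finsupp.single 0 2 + Finsupp.single 3 1) (1 : F2) := by
  rw [h0, w1, X_pow_eq_monomial, X, mon_mul_mon]

lemma KOM_add_self (x : KOM) : x + x = 0 := by
  rw [← two_smul F2 x, show (2 : F2) = 0 by decide, zero_smul]

lemma psi0_mul_gen1 (e : Fin 4 →₀ ℕ) : psi0 (monomial e 1 * (h0 * h1)) = 0 := by
  rw [h0_mul_h1_eq, mon_mul_mon, psi0_monomial, nf]
  simp [Finsupp.add_apply, Finsupp.single_apply]

lemma psi0_mul_gen2 (e : Fin 4 →₀ ℕ) : psi0 (monomial e 1 * h1 ^ 3) = 0 := by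
  rw [h1_cube_eq, mon_mul_mon, psi0_monomial, nf]
  simp [Finsupp.add_apply, Finsupp.single_apply]

lemma psi0_mul_gen3 (e : Fin 4 →₀ ℕ) : psi0 (monomial e 1 * (h1 * vP)) = 0 := by
  rw [h1_mul_v_eq, mon_mul_mon, psi0_monomial, nf]
  simp [Finsupp.add_apply, Finsupp.single_apply]

lemma psi0_mul_gen4 (e : Fin 4 →₀ ℕ) :
    psi0 (monomial e 1 * (vP ^ 2 + h0 ^ 2 * w1)) = 0 := by
  rw [mul_add, map_add, v_sq_eq, h0sq_w1_eq, mon_mul_mon, mon_mul_mon,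
    psi0_monomial, psi0_monomial]
  set f1 := e + (Finsupp.single 2 2 : Fin 4 →₀ ℕ) with hf1
  set f2 := e + ((Finsupp.single 0 2 : Fin 4 →₀ ℕ) + Finsupp.single 3 1) with hf2
  have c10 : f1 0 = e 0 := by simp [hf1, Finsupp.single_apply]
  have c11 : f1 1 = e 1 := by simp [hf1, Finsupp.single_apply]
  have c12 : f1 2 = e 2 + 2 := by simp [hf1, Finsupp.single_apply]
  have c13 : f1 3 = e 3 := by simp [hf1, Finsupp.single_apply]
  have c20 : f2 0 = e 0 + 2 := by simp [hf2, Finsupp.single_apply]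
  have c21 : f2 1 = e 1 := by simp [hf2, Finsupp.single_apply]
  have c22 : f2 2 = e 2 := by simp [hf2, Finsupp.single_apply]
  have c23 : f2 3 = e 3 + 1 := by simp [hf2, Finsupp.single_apply]
  simp only [nf, c10, c11, c12, c13, c20, c21, c22, c23]
  by_cases hb : e 1 = 0
  · rw [if_pos hb, if_pos hb]
    by_cases hc : e 2 % 2 = 0
    · have h2 : (e 2 + 2) % 2 = 0 := by omega
      rw [if_pos h2, if_pos hc]
      have hd : (e 2 + 2) / 2 = e 2 / 2 + 1 := by omega
      rw [hd, show e 0 + 2 * (e 2 / 2 + 1) = e 0 + 2 + 2 * (e 2 / 2) by ring,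
        show e 3 + (e 2 / 2 + 1) = e 3 + 1 + e 2 / 2 by ring]
      exact KOM_add_self _
    · have h2 : ¬ (e 2 + 2) % 2 = 0 := by omega
      rw [if_neg h2, if_neg hc]
      have hd : (e 2 + 2) / 2 = e 2 / 2 + 1 := by omega
      rw [hd, show e 0 + 2 * (e 2 / 2 + 1) = e 0 + 2 + 2 * (e 2 / 2) by ring,
        show e 3 + (e 2 / 2 + 1) = e 3 + 1 + e 2 / 2 by ring]
      exact KOM_add_self _
  · rw [if_neg hb, if_neg hb,
      if_neg (by omega : ¬ (e 0 = 0 ∧ e 2 + 2 = 0)),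
      if_neg (by omega : ¬ (e 0 + 2 = 0 ∧ e 2 = 0)), add_zero]

lemma psi0_mul_gen (g : KOP)
    (hg : g ∈ ({h0 * h1, h1 ^ 3, h1 * vP, vP ^ 2 + h0 ^ 2 * w1} : Set KOP))
    (p : KOP) : psi0 (p * g) = 0 := by
  have : psi0 ∘ₗ LinearMap.mulRight F2 g = 0 := by
    apply (MvPolynomial.basisMonomials (Fin 4) F2).ext
    intro e
    have he : (MvPolynomial.basisMonomials (Fin 4) F2) e = monomial e 1 :=
      congrFun (MvPolynomial.coe_basisMonomials (Fin 4) F2) e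
    simp only [LinearMap.comp_apply, LinearMap.mulRight_apply, LinearMap.zero_apply, he]
    rcases hg with h | h | h | h <;> subst h
    · exact psi0_mul_gen1 e
    · exact psi0_mul_gen2 e
    · exact psi0_mul_gen3 e
    · exact psi0_mul_gen4 e
  have := congrArg (fun f => f p) (congrArg DFunLike.coe this)
  simpa using this

lemma psi0_ideal {x : KOP} (hx : x ∈ koExtIdeal) : psi0 x = 0 := by
  have key : ∀ x ∈ koExtIdeal, ∀ p : KOP, psi0 (p * x) = 0 := by
    intro x hx
    refine Submodule.span_induction ?_ ?_ ?_ ?_ hx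
    · intro g hg p; exact psi0_mul_gen g hg p
    · intro p; simp
    · intro a b _ _ ha hb p; rw [mul_add, map_add, ha, hb, add_zero]
    · intro r a _ ha p
      rw [smul_eq_mul, show p * (r * a) = (p * r) * a by ring, ha]
  simpa using key x hx 1

lemma KOExt_add_self (x : KOExt) : x + x = 0 := by
  rw [← two_smul F2 x, show (2 : F2) = 0 by decide, zero_smul]

lemma psi0_w1 (p : KOP) : psi0 (w1 * p) = (Polynomial.X : Polynomial F2) • psi0 p := by
  have h : psi0 ∘ₗ LinearMap.mulLeft F2 w1
      = (LinearMap.lsmul (Polynomial F2) KOM (Polynomial.X : Polynomial F2)).restrictScalars F2 ∘ₗ psi0 := by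
    apply (MvPolynomial.basisMonomials (Fin 4) F2).ext
    intro e
    have he := congrFun (MvPolynomial.coe_basisMonomials (Fin 4) F2) e
    simp only [LinearMap.comp_apply, LinearMap.mulLeft_apply, he,
      LinearMap.restrictScalars_apply, LinearMap.lsmul_apply]
    rw [w1, X, mon_mul_mon, psi0_monomial, psi0_monomial]
    have c0 : ((Finsupp.single 3 1 : Fin 4 →₀ ℕ) + e) 0 = e 0 := by
      simp [Finsupp.single_apply]
    have c1 : ((Finsupp.single 3 1 : Fin 4 →₀ ℕ) + e) 1 = e 1 := by
      simp [Finsupp.single_apply]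
    have c2 : ((Finsupp.single 3 1 : Fin 4 →₀ ℕ) + e) 2 = e 2 := by
      simp [Finsupp.single_apply]
    have c3 : ((Finsupp.single 3 1 : Fin 4 →₀ ℕ) + e) 3 = e 3 + 1 := by
      simp [Finsupp.single_apply]; omega
    simp only [nf, c0, c1, c2, c3]
    by_cases hb : e 1 = 0
    · rw [if_pos hb, if_pos hb]
      by_cases hc : e 2 % 2 = 0 <;>
        simp [hc, Finsupp.smul_single, smul_eq_mul, ← pow_succ',
          show ∀ k, e 3 + 1 + k = e 3 + k + 1 from fun k => by ring]
    · rw [if_neg hb, if_neg hb]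
      by_cases h2 : e 0 = 0 ∧ e 2 = 0
    
      · rcases h2 with ⟨h20, h22⟩
        by_cases hb1 : e 1 = 1
        · simp [h20, h22, hb1, Finsupp.smul_single, smul_eq_mul, ← pow_succ']
        · by_cases hb2 : e 1 = 2 <;>
            simp [h20, h22, hb1, hb2, Finsupp.smul_single, smul_eq_mul, ← pow_succ']
      · simp [h2]
  have := congrArg (fun f => f p) (congrArg DFunLike.coe h)
  simpa using this

def psiF2 : KOExt →ₗ[F2] KOM :=
  ((koExtIdeal.restrictScalars F2).liftQ psi0 (fun _ hx => psi0_ideal hx)) ∘ₗ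
    (Submodule.Quotient.restrictScalarsEquiv F2 koExtIdeal).symm.toLinearMap

lemma psiF2_mk (p : KOP) : psiF2 (mkKO p) = psi0 p := by
  have h1 : mkKO p = Submodule.Quotient.mk p := rfl
  rw [psiF2, LinearMap.comp_apply, h1, LinearEquiv.coe_toLinearMap,
    Submodule.Quotient.restrictScalarsEquiv_symm_mk]
  rfl

lemma smul_def (q : Polynomial F2) (x : KOExt) :
    q • x = Polynomial.aeval (mkKO w1) q * x := rfl

lemma psiF2_X_smul (x : KOExt) : psiF2 ((Polynomial.X : Polynomial F2) • x) = (Polynomial.X : Polynomial F2) • psiF2 x := by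
  obtain ⟨p, rfl⟩ := Ideal.Quotient.mk_surjective (I := koExtIdeal) x
  rw [smul_def, Polynomial.aeval_X]
  rw [show (Ideal.Quotient.mk koExtIdeal) p = mkKO p from rfl, ← map_mul, psiF2_mk, psiF2_mk,
    psi0_w1]

lemma psiF2_smul (q : Polynomial F2) (x : KOExt) : psiF2 (q • x) = q • psiF2 x := by
  induction q using Polynomial.induction_on generalizing x with
  | C a =>
    rcases (by decide : ∀ a : F2, a = 0 ∨ a = 1) a with h | h <;> subst h
    · rw [show (Polynomial.C (0 : F2)) = 0 from map_zero _, zero_smul, zero_smul, map_zero]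
    · rw [show (Polynomial.C (1 : F2)) = 1 from map_one _, one_smul, one_smul]
  | add p q hp hq => rw [add_smul, add_smul, map_add, hp, hq]
  | monomial n a hp =>
    rw [show (Polynomial.C a * Polynomial.X ^ (n + 1))
        = (Polynomial.C a * Polynomial.X ^ n) * Polynomial.X by ring,
      mul_smul, hp, psiF2_X_smul, mul_smul, mul_smul, ← mul_smul]

def psiKO : KOExt →ₗ[Polynomial F2] KOM where
  toFun := psiF2
  map_add' := map_add psiF2
  map_smul' := psiF2_smul

def phiKO : KOM →ₗ[Polynomial F2] KOExt := Finsupp.linearCombination (Polynomial F2) elt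


lemma exp_split (e : Fin 4 →₀ ℕ) :
    e = Finsupp.single 0 (e 0) + Finsupp.single 1 (e 1) + Finsupp.single 2 (e 2)
      + Finsupp.single 3 (e 3) := by
  ext i
  fin_cases i <;> simp [Finsupp.single_apply]

lemma mon_split (e : Fin 4 →₀ ℕ) :
    monomial e (1 : F2) = h0 ^ e 0 * h1 ^ e 1 * vP ^ e 2 * w1 ^ e 3 := by
  rw [h0, h1, vP, w1, X_pow_eq_monomial, X_pow_eq_monomial, X_pow_eq_monomial,
    X_pow_eq_monomial, mon_mul_mon, mon_mul_mon, mon_mul_mon, ← exp_split e]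

lemma mem1 : h0 * h1 ∈ koExtIdeal := Ideal.subset_span (by simp [koExtIdeal])
lemma mem2 : h1 ^ 3 ∈ koExtIdeal := Ideal.subset_span (by simp [koExtIdeal])
lemma mem3 : h1 * vP ∈ koExtIdeal := Ideal.subset_span (by simp [koExtIdeal])
lemma mem4 : vP ^ 2 + h0 ^ 2 * w1 ∈ koExtIdeal := Ideal.subset_span (by simp [koExtIdeal])

lemma r1 : mkKO h0 * mkKO h1 = 0 := by
  rw [← map_mul]; exact Ideal.Quotient.eq_zero_iff_mem.mpr mem1

lemma r2 : mkKO h1 ^ 3 = 0 := by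
  rw [← map_pow]; exact Ideal.Quotient.eq_zero_iff_mem.mpr mem2

lemma r3 : mkKO h1 * mkKO vP = 0 := by
  rw [← map_mul]; exact Ideal.Quotient.eq_zero_iff_mem.mpr mem3

lemma r4 : mkKO vP ^ 2 = mkKO h0 ^ 2 * mkKO w1 := by
  have h : mkKO vP ^ 2 + mkKO h0 ^ 2 * mkKO w1 = 0 := by
    rw [← map_pow, ← map_pow, ← map_mul, ← map_add]
    exact Ideal.Quotient.eq_zero_iff_mem.mpr mem4
  rw [← add_zero (mkKO vP ^ 2), ← KOExt_add_self (mkKO h0 ^ 2 * mkKO w1), ← add_assoc, h,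
    zero_add]

lemma Vpow (q : ℕ) : mkKO vP ^ (2 * q) = mkKO h0 ^ (2 * q) * mkKO w1 ^ q := by
  induction q with
  | zero => simp
  | succ n ih =>
    calc mkKO vP ^ (2 * (n + 1)) = mkKO vP ^ (2 * n) * mkKO vP ^ 2 := by ring
    _ = mkKO h0 ^ (2 * n) * mkKO w1 ^ n * (mkKO h0 ^ 2 * mkKO w1) := by rw [ih, r4]
    _ = mkKO h0 ^ (2 * (n + 1)) * mkKO w1 ^ (n + 1) := by ring

lemma z1 (a b : ℕ) (ha : a ≠ 0) (hb : b ≠ 0) : mkKO h0 ^ a * mkKO h1 ^ b = 0 := by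
  obtain ⟨a', rfl⟩ : ∃ a', a = a' + 1 := ⟨a - 1, by omega⟩
  obtain ⟨b', rfl⟩ : ∃ b', b = b' + 1 := ⟨b - 1, by omega⟩
  calc mkKO h0 ^ (a' + 1) * mkKO h1 ^ (b' + 1)
      = mkKO h0 ^ a' * mkKO h1 ^ b' * (mkKO h0 * mkKO h1) := by ring
  _ = 0 := by rw [r1, mul_zero]

lemma z2 (b : ℕ) (hb : 3 ≤ b) : mkKO h1 ^ b = 0 := by
  obtain ⟨k, rfl⟩ : ∃ k, b = 3 + k := ⟨b - 3, by omega⟩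
  rw [pow_add, r2, zero_mul]

lemma z3 (b c : ℕ) (hb : b ≠ 0) (hc : c ≠ 0) : mkKO h1 ^ b * mkKO vP ^ c = 0 := by
  obtain ⟨b', rfl⟩ : ∃ b', b = b' + 1 := ⟨b - 1, by omega⟩
  obtain ⟨c', rfl⟩ : ∃ c', c = c' + 1 := ⟨c - 1, by omega⟩
  calc mkKO h1 ^ (b' + 1) * mkKO vP ^ (c' + 1)
      = mkKO h1 ^ b' * mkKO vP ^ c' * (mkKO h1 * mkKO vP) := by ring
  _ = 0 := by rw [r3, mul_zero]

instance : IsScalarTower F2 (Polynomial F2) KOExt :=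
  ⟨fun c p x => by
    rw [smul_def, smul_def, map_smul]
    exact smul_mul_assoc c _ x⟩

lemma phi_single (idx : KOIdx) (k : ℕ) :
    phiKO (Finsupp.single idx (Polynomial.X ^ k)) = mkKO w1 ^ k * elt idx := by
  rw [phiKO, Finsupp.linearCombination_single, smul_def, map_pow, Polynomial.aeval_X]

lemma phi_nf (e : Fin 4 →₀ ℕ) : phiKO (nf e) = mkKO (monomial e 1) := by
  rw [show mkKO (monomial e 1)
      = mkKO h0 ^ e 0 * mkKO h1 ^ e 1 * mkKO vP ^ e 2 * mkKO w1 ^ e 3 by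
    rw [mon_split, map_mul, map_mul, map_mul, map_pow, map_pow, map_pow, map_pow]]
  rw [nf]
  by_cases hb : e 1 = 0
  · rw [if_pos hb, hb, pow_zero, mul_one]
    by_cases hc : e 2 % 2 = 0
    · rw [if_pos hc, phi_single]
      show _ * mkKO (h0 ^ (e 0 + 2 * (e 2 / 2))) = _
      rw [map_pow]
      conv_rhs => rw [show e 2 = 2 * (e 2 / 2) by omega]
      rw [Vpow, pow_add, pow_add]
      ring
    · rw [if_neg hc, phi_single]
      show _ * mkKO (vP * h0 ^ (e 0 + 2 * (e 2 / 2))) = _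
      rw [map_mul, map_pow]
      conv_rhs => rw [show e 2 = 2 * (e 2 / 2) + 1 by omega, pow_add, Vpow]
      ring
  · rw [if_neg hb]
    by_cases h2 : e 0 = 0 ∧ e 2 = 0
    · obtain ⟨h20, h22⟩ := h2
      rw [if_pos ⟨h20, h22⟩, h20, h22, pow_zero, pow_zero, one_mul, mul_one]
      by_cases hb1 : e 1 = 1
      · rw [if_pos hb1, hb1, phi_single,
          show elt (Sum.inr (Sum.inl 0)) = mkKO h1 ^ 1 by simp [elt]]
        ring
      · by_cases hb2 : e 1 = 2
        · rw [if_neg hb1, if_pos hb2, hb2, phi_single,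
            show elt (Sum.inr (Sum.inl 1)) = mkKO h1 ^ 2 by simp [elt, map_pow]]
          ring
        · rw [if_neg hb1, if_neg hb2, map_zero, z2 _ (by omega), zero_mul]
    · rw [if_neg h2, map_zero]
      rcases (by tauto : e 0 ≠ 0 ∨ e 2 ≠ 0) with h | h
      · rw [z1 _ _ h hb, zero_mul, zero_mul]
      · rw [mul_assoc (mkKO h0 ^ e 0), z3 _ _ hb h, mul_zero, zero_mul]

lemma psi_elt (i : KOIdx) : psiF2 (elt i) = Finsupp.single i 1 := by
  cases i with
  | inl n =>
    show psiF2 (mkKO (h0 ^ n)) = _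
    rw [psiF2_mk, h0, X_pow_eq_monomial, psi0_monomial, nf]
    simp [Finsupp.single_apply]
  | inr j =>
    cases j with
    | inl j =>
      show psiF2 (mkKO (h1 ^ ((j : ℕ) + 1))) = _
      rw [psiF2_mk, h1, X_pow_eq_monomial, psi0_monomial, nf]
      fin_cases j <;> simp [Finsupp.single_apply]
    | inr n =>
      show psiF2 (mkKO (vP * h0 ^ n)) = _
      rw [psiF2_mk, vP, h0, X, X_pow_eq_monomial, mon_mul_mon, psi0_monomial, nf]
      simp [Finsupp.single_apply]

/-- `R` is a free `F₂[w₁]`-module with basis `{h₀^i} ∪ {h₁, h₁²} ∪ {v·h₀^i}`. -/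
theorem koExt_free_over_w1 :
    ∃ B : Module.Basis (ℕ ⊕ (Fin 2 ⊕ ℕ)) (Polynomial F2) KOExt,
      (∀ i : ℕ, B (Sum.inl i) = mkKO (h0 ^ i)) ∧
      (∀ j : Fin 2, B (Sum.inr (Sum.inl j)) = mkKO (h1 ^ ((j : ℕ) + 1))) ∧
      (∀ i : ℕ, B (Sum.inr (Sum.inr i)) = mkKO (vP * h0 ^ i)) := by
  have hphi1 : ∀ i : KOIdx, phiKO (Finsupp.single i 1) = elt i := by
    intro i
    rw [phiKO, Finsupp.linearCombination_single, one_smul]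
  have hleft : ∀ m : KOM, psiKO (phiKO m) = m := by
    have h : psiKO ∘ₗ phiKO = LinearMap.id := by
      apply (Finsupp.basisSingleOne (R := Polynomial F2) (ι := KOIdx)).ext
      intro i
      rw [LinearMap.comp_apply, LinearMap.id_apply, Finsupp.coe_basisSingleOne, hphi1]
      exact psi_elt i
    intro m
    exact congrFun (congrArg DFunLike.coe h) m
  have hright : ∀ x : KOExt, phiKO (psiKO x) = x := by
    have h : (phiKO.restrictScalars F2) ∘ₗ (psiF2 ∘ₗ
          (Ideal.Quotient.mkₐ F2 koExtIdeal).toLinearMap)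
        = (Ideal.Quotient.mkₐ F2 koExtIdeal).toLinearMap := by
      apply (MvPolynomial.basisMonomials (Fin 4) F2).ext
      intro e
      have he := congrFun (MvPolynomial.coe_basisMonomials (Fin 4) F2) e
      simp only [LinearMap.comp_apply, LinearMap.restrictScalars_apply, he,
        AlgHom.toLinearMap_apply]
      rw [show (Ideal.Quotient.mkₐ F2 koExtIdeal) ((monomial e) 1) = mkKO (monomial e 1)
        from rfl, psiF2_mk, psi0_monomial, phi_nf]
    intro x
    obtain ⟨p, rfl⟩ := Ideal.Quotient.mk_surjective (I := koExtIdeal) x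
    have := congrFun (congrArg DFunLike.coe h) p
    simp at this; exact this
  have hbij : Function.Bijective phiKO :=
    Function.bijective_iff_has_inverse.mpr ⟨psiKO, hleft, hright⟩
  refine ⟨Module.Basis.ofRepr (LinearEquiv.ofBijective phiKO hbij).symm, ?_, ?_, ?_⟩ <;>
    intro i <;>
    · show (LinearEquiv.ofBijective phiKO hbij).symm.symm (Finsupp.single _ 1) = _
      rw [LinearEquiv.symm_symm, LinearEquiv.ofBijective_apply, hphi1]
      rfl
end
end

section
/- Let R = F_2[h0, h1, v, w1]/(h0·h1, h1^3, h1·v, v^2 + h0^2·w1). The subalgebra of R generated by h0, h1 and w1 equals, as an F_2[w1]-submodule, the span of {h0^i w1^k : i,k ≥ 0} ∪ {h1 w1^k, h1^2 w1^k : k ≥ 0}, and the quotient of R by this subalgebra is a free F_2[h0, w1]-module on one generator, the image of v. -/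
noncomputable section

open MvPolynomial

set_option maxHeartbeats 1000000
set_option synthInstance.maxHeartbeats 1000000

/-- `F₂[h₀, w₁]`. -/
abbrev H0W1 := MvPolynomial (Fin 2) F2

/-- `R` as a module over `F₂[h₀, w₁]`. -/
instance : Module H0W1 KOExt :=
  RingHom.toModule (MvPolynomial.aeval ![mkKO h0, mkKO w1]).toRingHom

/-! ### auxiliary lemmas -/

lemma psmul_def (p : Polynomial F2) (x : KOExt) :
    p • x = Polynomial.aeval (mkKO w1) p * x := rfl
lemma hsmul_def (p : H0W1) (x : KOExt) :
    p • x = MvPolynomial.aeval ![mkKO h0, mkKO w1] p * x := rfl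

lemma mk_eq_zero {x : KOP} (hx : x ∈ koExtIdeal) : mkKO x = 0 :=
  (Ideal.Quotient.eq_zero_iff_mem).2 hx

lemma mk_mul_rel_eq_zero {q r : KOP}
    (hr : r ∈ ({h0 * h1, h1 ^ 3, h1 * vP, vP ^ 2 + h0 ^ 2 * w1} : Set KOP))
    {a : KOP} (hq : q = a * r) : mkKO q = 0 := by
  apply mk_eq_zero
  rw [hq]
  exact Ideal.mul_mem_left _ a (Ideal.subset_span hr)

lemma rel4 : mkKO (vP ^ 2) = mkKO (h0 ^ 2 * w1) := by
  refine (Ideal.Quotient.mk_eq_mk_iff_sub_mem _ _).2 ?_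
  rw [CharTwo.sub_eq_add]
  exact Ideal.subset_span (by simp)

/-! ### parity lemmas in `H0W1` -/

def PevP (q : H0W1) : Prop := ∀ m : Fin 2 →₀ ℕ, Odd (m 1) → coeff m q = 0

def QodP (q : H0W1) : Prop := ∀ m : Fin 2 →₀ ℕ, Even (m 1) → coeff m q = 0

lemma PevP_mul {a b : H0W1} (ha : PevP a) (hb : PevP b) : PevP (a * b) := by
  intro m hm
  rw [coeff_mul]
  refine Finset.sum_eq_zero fun x hx => ?_
  rw [Finset.HasAntidiagonal.mem_antidiagonal] at hx
  have hsum : x.1 1 + x.2 1 = m 1 := by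
    rw [← hx]; simp
  rcases Nat.even_or_odd (x.1 1) with h | h
  · have : Odd (x.2 1) := by
      rcases Nat.even_or_odd (x.2 1) with h2 | h2
      · exact absurd (hsum ▸ Even.add h h2) (Nat.not_even_iff_odd.2 hm)
      · exact h2
    rw [hb _ this, mul_zero]
  · rw [ha _ h, zero_mul]

lemma PevP_sq (a : H0W1) : PevP (a * a) := by
  intro m hm
  rw [coeff_mul]
  apply Finset.sum_involution (fun x _ => x.swap)
  · intro x hx
    simp only [Prod.fst_swap, Prod.snd_swap]
    rw [mul_comm]
    exact CharTwo.add_self_eq_zero _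
  · intro x hx h heq
    have h12 : x.1 = x.2 := congrArg Prod.fst heq.symm
    rw [Finset.HasAntidiagonal.mem_antidiagonal] at hx
    rw [← hx] at hm
    rw [h12] at hm
    have h2 : (x.2 + x.2) 1 = 2 * (x.2 1) := by simp [two_mul]
    rw [h2] at hm
    exact (Nat.not_odd_iff_even.2 ⟨x.2 1, two_mul _⟩) hm
  · intro x hx; exact Prod.swap_swap x
  · intro x hx
    rw [Finset.HasAntidiagonal.mem_antidiagonal] at hx ⊢
    rw [Prod.fst_swap, Prod.snd_swap, add_comm]; exact hx

lemma PevP_X0sq : PevP ((X 0 : H0W1) ^ 2) := by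
  intro m hm
  rw [X_pow_eq_monomial, coeff_monomial]
  split
  · next h => rw [← h] at hm; simp [Finsupp.single_apply] at hm
  · rfl

lemma PevP_X1sq : PevP ((X 1 : H0W1) ^ 2) := by
  intro m hm
  rw [X_pow_eq_monomial, coeff_monomial]
  split
  · next h =>
      rw [← h] at hm; simp [Finsupp.single_apply] at hm
      exact absurd hm (by decide)
  · rfl

lemma PevP_adjoin {q : H0W1} (hq : q ∈ Algebra.adjoin F2 ({X 0 ^ 2, 0, X 1 ^ 2} : Set H0W1)) :
    PevP q := by
  induction hq using Algebra.adjoin_induction with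
  | mem x hx =>
      rcases hx with h | h | h
      · rw [h]; exact PevP_X0sq
      · rw [h]; intro m _; simp
      · rw [Set.mem_singleton_iff] at h; rw [h]; exact PevP_X1sq
  | algebraMap r =>
      intro m hm
      rw [MvPolynomial.algebraMap_eq, coeff_C]
      split
      · next h => rw [← h] at hm; simp at hm
      · rfl
  | add x y hx hy ihx ihy => intro m hm; rw [coeff_add, ihx m hm, ihy m hm, add_zero]
  | mul x y hx hy ihx ihy => exact PevP_mul ihx ihy

lemma QodP_mul_X1 {r : H0W1} (hr : PevP r) : QodP (r * X 1) := by
  intro m hm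
  rw [coeff_mul_X']
  split
  · next h =>
      apply hr
      have h1 : m 1 ≠ 0 := Finsupp.mem_support_iff.1 h
      have : (m - Finsupp.single (1 : Fin 2) 1 : Fin 2 →₀ ℕ) (1 : Fin 2) = m 1 - 1 := by
        rw [Finsupp.tsub_apply, Finsupp.single_eq_same]
      rw [this]
      rcases hm with ⟨k, hk⟩
      rcases Nat.exists_eq_succ_of_ne_zero h1 with ⟨n, hn⟩
      refine ⟨n / 2, ?_⟩
      omega
  · rfl

lemma aeval_sq (p : H0W1) : MvPolynomial.aeval ![(X 0 : H0W1) ^ 2, X 1 ^ 2] p = p * p := by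
  have hr2 : ∀ r : F2, r ^ 2 = r := by decide
  have h : (MvPolynomial.aeval ![(X 0 : H0W1) ^ 2, X 1 ^ 2] : H0W1 →ₐ[F2] H0W1).toRingHom
      = frobenius H0W1 2 := by
    apply MvPolynomial.ringHom_ext
    · intro r
      simp only [frobenius_def, AlgHom.toRingHom_eq_coe, RingHom.coe_coe, aeval_C]
      rw [← map_pow, hr2]
      rfl
    · intro i
      simp only [frobenius_def, AlgHom.toRingHom_eq_coe, RingHom.coe_coe, aeval_X]
      fin_cases i <;> simp
  have h2 := congrArg (fun f => f p) h
  simp only [AlgHom.toRingHom_eq_coe, RingHom.coe_coe] at h2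
  rw [h2, frobenius_def, sq]

lemma key_inj (p : H0W1)
    (hq : MvPolynomial.aeval ![(X 0 : H0W1) ^ 2, X 1 ^ 2] p * (X 0 ^ 2 * X 1)
      ∈ Algebra.adjoin F2 ({X 0 ^ 2, 0, X 1 ^ 2} : Set H0W1)) : p = 0 := by
  rw [aeval_sq] at hq
  have hP : PevP (p * p * (X 0 ^ 2 * X 1)) := PevP_adjoin hq
  have hQ : QodP (p * p * (X 0 ^ 2 * X 1)) := by
    have h : p * p * (X 0 ^ 2 * X 1) = (p * p * X 0 ^ 2) * X 1 := by ring
    rw [h]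
    exact QodP_mul_X1 (PevP_mul (PevP_sq p) PevP_X0sq)
  have hz : p * p * (X 0 ^ 2 * X 1) = 0 := by
    apply MvPolynomial.ext
    intro m
    rcases Nat.even_or_odd (m 1) with h | h
    · rw [hQ m h]; simp
    · rw [hP m h]; simp
  have hX : (X 0 : H0W1) ^ 2 * X 1 ≠ 0 :=
    mul_ne_zero (pow_ne_zero _ (X_ne_zero _)) (X_ne_zero _)
  rcases mul_eq_zero.1 hz with h | h
  · exact mul_self_eq_zero.1 h
  · exact absurd h hX

/-! ### the detecting homomorphism -/

def phi : KOP →ₐ[F2] H0W1 :=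
  MvPolynomial.aeval ![(X 0 : H0W1) ^ 2, 0, X 0 ^ 2 * X 1, X 1 ^ 2]

lemma phi_ker : ∀ a ∈ koExtIdeal, phi.toRingHom a = 0 := by
  intro a ha
  rw [← RingHom.mem_ker]
  refine Ideal.span_le.2 ?_ ha
  rintro r (h | h | h | h) <;> rw [h] <;> simp only [SetLike.mem_coe, RingHom.mem_ker]
  · simp [phi, h0, h1]
  · simp [phi, h1]
  · simp [phi, h1, vP]
  · have h1 : phi.toRingHom (vP ^ 2 + h0 ^ 2 * w1)
        = (X 0 ^ 2 * X 1 : H0W1) ^ 2 + ((X 0 : H0W1) ^ 2) ^ 2 * (X 1 : H0W1) ^ 2 := by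
      simp [phi, vP, h0, w1]
    rw [h1]
    have h2 : ((X 0 : H0W1) ^ 2 * X 1) ^ 2 + ((X 0 : H0W1) ^ 2) ^ 2 * (X 1 : H0W1) ^ 2
        = ((X 0 : H0W1) ^ 2 * X 1) ^ 2 + ((X 0 : H0W1) ^ 2 * X 1) ^ 2 := by ring
    rw [h2]
    exact CharTwo.add_self_eq_zero _

def phiBar : KOExt →+* H0W1 :=
  Ideal.Quotient.lift koExtIdeal phi.toRingHom phi_ker

lemma phiBar_mk (x : KOP) : phiBar (mkKO x) = phi x :=
  Ideal.Quotient.lift_mk _ _ _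

lemma phiBar_h0 : phiBar (mkKO h0) = (X 0 : H0W1) ^ 2 := by
  rw [phiBar_mk]; simp [phi, h0]
lemma phiBar_h1 : phiBar (mkKO h1) = 0 := by
  rw [phiBar_mk]; simp [phi, h1]
lemma phiBar_w1 : phiBar (mkKO w1) = (X 1 : H0W1) ^ 2 := by
  rw [phiBar_mk]; simp [phi, w1]
lemma phiBar_vP : phiBar (mkKO vP) = (X 0 : H0W1) ^ 2 * X 1 := by
  rw [phiBar_mk]; simp [phi, vP]

lemma phiBar_adjoin {x : KOExt}
    (hx : x ∈ Algebra.adjoin F2 ({mkKO h0, mkKO h1, mkKO w1} : Set KOExt)) :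
    phiBar x ∈ Algebra.adjoin F2 ({X 0 ^ 2, 0, X 1 ^ 2} : Set H0W1) := by
  induction hx using Algebra.adjoin_induction with
  | mem y hy =>
      rcases hy with h | h | h
      · rw [h, phiBar_h0]; exact Algebra.subset_adjoin (by simp)
      · rw [h, phiBar_h1]; exact Algebra.subset_adjoin (by simp)
      · rw [Set.mem_singleton_iff] at h; rw [h, phiBar_w1]
        exact Algebra.subset_adjoin (by simp)
  | algebraMap r =>
      have h : (algebraMap F2 KOExt) r = mkKO (C r) := rfl
      rw [h, phiBar_mk]
      have h2 : phi (C r) = algebraMap F2 H0W1 r := by simp [phi]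
      rw [h2]
      exact Subalgebra.algebraMap_mem _ _
  | add x y hx hy ihx ihy => rw [map_add]; exact add_mem ihx ihy
  | mul x y hx hy ihx ihy => rw [map_mul]; exact mul_mem ihx ihy

lemma phiBar_aeval (p : H0W1) :
    phiBar (MvPolynomial.aeval ![mkKO h0, mkKO w1] p)
      = MvPolynomial.aeval ![(X 0 : H0W1) ^ 2, X 1 ^ 2] p := by
  have h : phiBar.comp (MvPolynomial.aeval ![mkKO h0, mkKO w1] : H0W1 →ₐ[F2] KOExt).toRingHom
      = (MvPolynomial.aeval ![(X 0 : H0W1) ^ 2, X 1 ^ 2] : H0W1 →ₐ[F2] H0W1).toRingHom := by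
    apply MvPolynomial.ringHom_ext
    · intro r
      simp only [RingHom.coe_comp, Function.comp_apply, AlgHom.toRingHom_eq_coe,
        RingHom.coe_coe, aeval_C]
      have h : (algebraMap F2 KOExt) r = mkKO (C r) := rfl
      rw [h, phiBar_mk]
      simp [phi]
    · intro i
      fin_cases i
      · simp only [RingHom.coe_comp, Function.comp_apply, AlgHom.toRingHom_eq_coe,
          RingHom.coe_coe, aeval_X]
        simpa using phiBar_h0
      · simp only [RingHom.coe_comp, Function.comp_apply, AlgHom.toRingHom_eq_coe,
          RingHom.coe_coe, aeval_X]
        simpa using phiBar_w1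
  exact congrArg (fun f => f p) h

/-- The key independence statement. -/
lemma indep (p : H0W1)
    (hp : MvPolynomial.aeval ![mkKO h0, mkKO w1] p * mkKO vP
      ∈ Algebra.adjoin F2 ({mkKO h0, mkKO h1, mkKO w1} : Set KOExt)) : p = 0 := by
  apply key_inj
  have := phiBar_adjoin hp
  rw [map_mul, phiBar_aeval, phiBar_vP] at this
  exact this

/-! ### the generating set and its span -/

def genSet : Set KOExt :=
  {x | ∃ i k : ℕ, x = mkKO (h0 ^ i * w1 ^ k)} ∪
  {x | ∃ k : ℕ, x = mkKO (h1 * w1 ^ k) ∨ x = mkKO (h1 ^ 2 * w1 ^ k)}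

lemma mk_mul (a b : KOP) : mkKO a * mkKO b = mkKO (a * b) := (map_mul mkKO a b).symm

lemma g1g1 (i k i' k' : ℕ) :
    mkKO (h0 ^ i * w1 ^ k) * mkKO (h0 ^ i' * w1 ^ k') = mkKO (h0 ^ (i + i') * w1 ^ (k + k')) := by
  rw [mk_mul]; congr 1; ring

lemma g1g2 (j k l : ℕ) : mkKO (h0 ^ (j + 1) * w1 ^ k) * mkKO (h1 * w1 ^ l) = 0 := by
  rw [mk_mul]
  exact mk_mul_rel_eq_zero (r := h0 * h1) (by simp) (a := h0 ^ j * w1 ^ (k + l)) (by ring)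

lemma g1g2' (k l : ℕ) :
    mkKO (h0 ^ 0 * w1 ^ k) * mkKO (h1 * w1 ^ l) = mkKO (h1 * w1 ^ (k + l)) := by
  rw [mk_mul]; congr 1; ring

lemma g1g3 (j k l : ℕ) : mkKO (h0 ^ (j + 1) * w1 ^ k) * mkKO (h1 ^ 2 * w1 ^ l) = 0 := by
  rw [mk_mul]
  exact mk_mul_rel_eq_zero (r := h0 * h1) (by simp) (a := h0 ^ j * w1 ^ (k + l) * h1) (by ring)

lemma g1g3' (k l : ℕ) :
    mkKO (h0 ^ 0 * w1 ^ k) * mkKO (h1 ^ 2 * w1 ^ l) = mkKO (h1 ^ 2 * w1 ^ (k + l)) := by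
  rw [mk_mul]; congr 1; ring

lemma g2g2 (k l : ℕ) :
    mkKO (h1 * w1 ^ k) * mkKO (h1 * w1 ^ l) = mkKO (h1 ^ 2 * w1 ^ (k + l)) := by
  rw [mk_mul]; congr 1; ring

lemma g2g3 (k l : ℕ) : mkKO (h1 * w1 ^ k) * mkKO (h1 ^ 2 * w1 ^ l) = 0 := by
  rw [mk_mul]
  exact mk_mul_rel_eq_zero (r := h1 ^ 3) (by simp) (a := w1 ^ (k + l)) (by ring)

lemma g3g3 (k l : ℕ) : mkKO (h1 ^ 2 * w1 ^ k) * mkKO (h1 ^ 2 * w1 ^ l) = 0 := by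
  rw [mk_mul]
  exact mk_mul_rel_eq_zero (r := h1 ^ 3) (by simp) (a := h1 * w1 ^ (k + l)) (by ring)

lemma mem_span_genSet_g1 (i k : ℕ) :
    mkKO (h0 ^ i * w1 ^ k) ∈ Submodule.span (Polynomial F2) genSet :=
  Submodule.subset_span (Or.inl ⟨i, k, rfl⟩)

lemma mem_span_genSet_g2 (k : ℕ) :
    mkKO (h1 * w1 ^ k) ∈ Submodule.span (Polynomial F2) genSet :=
  Submodule.subset_span (Or.inr ⟨k, Or.inl rfl⟩)

lemma mem_span_genSet_g3 (k : ℕ) :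
    mkKO (h1 ^ 2 * w1 ^ k) ∈ Submodule.span (Polynomial F2) genSet :=
  Submodule.subset_span (Or.inr ⟨k, Or.inr rfl⟩)

lemma genSet_mul : ∀ x ∈ genSet, ∀ y ∈ genSet,
    x * y ∈ Submodule.span (Polynomial F2) genSet := by
  rintro x (⟨i, k, rfl⟩ | ⟨k, hx | hx⟩) y hy
  · rcases hy with ⟨i', k', rfl⟩ | ⟨l, hy | hy⟩
    · rw [g1g1]; exact mem_span_genSet_g1 _ _
    · subst hy
      rcases i with _ | j
      · rw [g1g2']; exact mem_span_genSet_g2 _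
      · rw [g1g2]; exact Submodule.zero_mem _
    · subst hy
      rcases i with _ | j
      · rw [g1g3']; exact mem_span_genSet_g3 _
      · rw [g1g3]; exact Submodule.zero_mem _
  · subst hx
    rcases hy with ⟨i', k', rfl⟩ | ⟨l, hy | hy⟩
    · rw [mul_comm]
      rcases i' with _ | j
      · rw [g1g2']; exact mem_span_genSet_g2 _
      · rw [g1g2]; exact Submodule.zero_mem _
    · subst hy; rw [g2g2]; exact mem_span_genSet_g3 _
    · subst hy; rw [g2g3]; exact Submodule.zero_mem _
  · subst hx
    rcases hy with ⟨i', k', rfl⟩ | ⟨l, hy | hy⟩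
    · rw [mul_comm]
      rcases i' with _ | j
      · rw [g1g3']; exact mem_span_genSet_g3 _
      · rw [g1g3]; exact Submodule.zero_mem _
    · subst hy; rw [mul_comm, g2g3]; exact Submodule.zero_mem _
    · subst hy; rw [g3g3]; exact Submodule.zero_mem _

lemma span_genSet_mul_closed : ∀ x ∈ Submodule.span (Polynomial F2) genSet,
    ∀ y ∈ Submodule.span (Polynomial F2) genSet,
    x * y ∈ Submodule.span (Polynomial F2) genSet := by
  have hgen : ∀ x ∈ genSet, ∀ y ∈ Submodule.span (Polynomial F2) genSet,
      x * y ∈ Submodule.span (Polynomial F2) genSet := by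
    intro x hx y hy
    induction hy using Submodule.span_induction with
    | mem z hz => exact genSet_mul x hx z hz
    | zero => rw [mul_zero]; exact Submodule.zero_mem _
    | add a b _ _ iha ihb => rw [mul_add]; exact add_mem iha ihb
    | smul p a _ ih =>
        have h : x * (p • a) = p • (x * a) := by
          rw [psmul_def, psmul_def, mul_left_comm]
        rw [h]; exact Submodule.smul_mem _ _ ih
  intro x hx y hy
  induction hx using Submodule.span_induction with
  | mem z hz => exact hgen z hz y hy
  | zero => rw [zero_mul]; exact Submodule.zero_mem _
  | add a b _ _ iha ihb => rw [add_mul]; exact add_mem iha ihb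
  | smul p a _ ih =>
      have h : (p • a) * y = p • (a * y) := by
        rw [psmul_def, psmul_def, mul_assoc]
      rw [h]; exact Submodule.smul_mem _ _ ih

/-! ### Part 1: the span equality -/

lemma part1 :
    ((Algebra.adjoin F2 {mkKO h0, mkKO h1, mkKO w1} : Subalgebra F2 KOExt) : Set KOExt)
      = ↑(Submodule.span (Polynomial F2) genSet) := by
  apply Set.Subset.antisymm
  · intro x hx
    rw [SetLike.mem_coe] at hx ⊢
    induction hx using Algebra.adjoin_induction with
    | mem y hy =>
        rcases hy with h | h | h
        · rw [h, show mkKO h0 = mkKO (h0 ^ 1 * w1 ^ 0) by rw [pow_one, pow_zero, mul_one]]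
          exact mem_span_genSet_g1 1 0
        · rw [h, show mkKO h1 = mkKO (h1 * w1 ^ 0) by rw [pow_zero, mul_one]]
          exact mem_span_genSet_g2 0
        · rw [Set.mem_singleton_iff] at h
          rw [h, show mkKO w1 = mkKO (h0 ^ 0 * w1 ^ 1) by rw [pow_one, pow_zero, one_mul]]
          exact mem_span_genSet_g1 0 1
    | algebraMap r =>
        rcases (by decide : ∀ r : F2, r = 0 ∨ r = 1) r with h | h
        · rw [h, map_zero]; exact Submodule.zero_mem _
        · rw [h, map_one,
            show (1 : KOExt) = mkKO (h0 ^ 0 * w1 ^ 0) by rw [pow_zero, pow_zero, mul_one, map_one]]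
          exact mem_span_genSet_g1 0 0
    | add x y hx hy ihx ihy => exact add_mem ihx ihy
    | mul x y hx hy ihx ihy => exact span_genSet_mul_closed x ihx y ihy
  · intro x hx
    rw [SetLike.mem_coe] at hx ⊢
    have hA : mkKO h0 ∈ Algebra.adjoin F2 ({mkKO h0, mkKO h1, mkKO w1} : Set KOExt) :=
      Algebra.subset_adjoin (by simp)
    have hB : mkKO h1 ∈ Algebra.adjoin F2 ({mkKO h0, mkKO h1, mkKO w1} : Set KOExt) :=
      Algebra.subset_adjoin (by simp)
    have hC : mkKO w1 ∈ Algebra.adjoin F2 ({mkKO h0, mkKO h1, mkKO w1} : Set KOExt) :=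
      Algebra.subset_adjoin (by simp)
    induction hx using Submodule.span_induction with
    | mem z hz =>
        rcases hz with ⟨i, k, rfl⟩ | ⟨k, h | h⟩
        · rw [map_mul, map_pow, map_pow]
          exact mul_mem (pow_mem hA i) (pow_mem hC k)
        · rw [h, map_mul, map_pow]
          exact mul_mem hB (pow_mem hC k)
        · rw [h, map_mul, map_pow, map_pow]
          exact mul_mem (pow_mem hB 2) (pow_mem hC k)
    | zero => exact zero_mem _
    | add a b _ _ iha ihb => exact add_mem iha ihb
    | smul p a _ ih =>
        rw [psmul_def]
        refine mul_mem ?_ ih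
        have h1 : Polynomial.aeval (mkKO w1) p ∈ Algebra.adjoin F2 ({mkKO w1} : Set KOExt) := by
          rw [Algebra.adjoin_singleton_eq_range_aeval]
          exact ⟨p, rfl⟩
        refine Algebra.adjoin_mono ?_ h1
        intro y hy
        rw [Set.mem_singleton_iff] at hy
        simp [hy]

/-! ### Part 2: the submodule `T` and the quotient basis -/

def TT : Submodule H0W1 KOExt where
  carrier := (Algebra.adjoin F2 ({mkKO h0, mkKO h1, mkKO w1} : Set KOExt) : Set KOExt)
  add_mem' := fun ha hb => add_mem ha hb
  zero_mem' := zero_mem _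
  smul_mem' := by
    intro p x hx
    rw [SetLike.mem_coe] at hx ⊢
    show p • x ∈ Algebra.adjoin F2 ({mkKO h0, mkKO h1, mkKO w1} : Set KOExt)
    rw [hsmul_def]
    refine mul_mem ?_ hx
    have h1 : MvPolynomial.aeval ![mkKO h0, mkKO w1] p
        ∈ Algebra.adjoin F2 (Set.range ![mkKO h0, mkKO w1]) := by
      rw [Algebra.adjoin_range_eq_range_aeval]
      exact ⟨p, rfl⟩
    refine Algebra.adjoin_mono ?_ h1
    rintro y ⟨i, rfl⟩
    fin_cases i
    · simp
    · simp

lemma mem_TT {x : KOExt} :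
    x ∈ TT ↔ x ∈ Algebra.adjoin F2 ({mkKO h0, mkKO h1, mkKO w1} : Set KOExt) := Iff.rfl

lemma monomial_mem : ∀ c a b d : ℕ,
    mkKO (h0 ^ a * h1 ^ b * vP ^ c * w1 ^ d) ∈ TT ⊔ Submodule.span H0W1 {mkKO vP} := by
  intro c
  induction c using Nat.strong_induction_on with
  | _ c ih =>
    intro a b d
    match c with
    | 0 =>
        apply Submodule.mem_sup_left
        rw [mem_TT, show h0 ^ a * h1 ^ b * vP ^ 0 * w1 ^ d = h0 ^ a * h1 ^ b * w1 ^ d by ring,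
          map_mul, map_mul, map_pow, map_pow, map_pow]
        exact mul_mem (mul_mem (pow_mem (Algebra.subset_adjoin (by simp)) a)
          (pow_mem (Algebra.subset_adjoin (by simp)) b))
          (pow_mem (Algebra.subset_adjoin (by simp)) d)
    | 1 =>
        match b with
        | 0 =>
            apply Submodule.mem_sup_right
            have he : ((X 0 : H0W1) ^ a * X 1 ^ d) • mkKO vP
                = mkKO (h0 ^ a * h1 ^ 0 * vP ^ 1 * w1 ^ d) := by
              rw [hsmul_def, map_mul, map_pow, map_pow, aeval_X, aeval_X]
              simp only [Matrix.cons_val_zero, Matrix.cons_val_one, Matrix.head_cons]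
              rw [← map_pow, ← map_pow, mk_mul, mk_mul]
              congr 1; ring
            rw [← he]
            exact Submodule.smul_mem _ _ (Submodule.mem_span_singleton_self _)
        | b' + 1 =>
            rw [mk_mul_rel_eq_zero (q := h0 ^ a * h1 ^ (b' + 1) * vP ^ 1 * w1 ^ d)
              (r := h1 * vP) (by simp) (a := h0 ^ a * h1 ^ b' * w1 ^ d) (by ring)]
            exact Submodule.zero_mem _
    | c + 2 =>
        have he : mkKO (h0 ^ a * h1 ^ b * vP ^ (c + 2) * w1 ^ d)
            = mkKO (h0 ^ (a + 2) * h1 ^ b * vP ^ c * w1 ^ (d + 1)) := by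
          rw [show h0 ^ a * h1 ^ b * vP ^ (c + 2) * w1 ^ d
              = (h0 ^ a * h1 ^ b * vP ^ c * w1 ^ d) * vP ^ 2 by ring,
            show h0 ^ (a + 2) * h1 ^ b * vP ^ c * w1 ^ (d + 1)
              = (h0 ^ a * h1 ^ b * vP ^ c * w1 ^ d) * (h0 ^ 2 * w1) by ring,
            ← mk_mul (h0 ^ a * h1 ^ b * vP ^ c * w1 ^ d) (vP ^ 2),
            ← mk_mul (h0 ^ a * h1 ^ b * vP ^ c * w1 ^ d) (h0 ^ 2 * w1), rel4]
        rw [he]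
        exact ih c (by omega) _ _ _

lemma sup_eq_top : TT ⊔ Submodule.span H0W1 {mkKO vP} = ⊤ := by
  rw [eq_top_iff]
  rintro x -
  obtain ⟨q, rfl⟩ := Ideal.Quotient.mk_surjective x
  show mkKO q ∈ _
  rw [← support_sum_monomial_coeff q, map_sum]
  apply Submodule.sum_mem
  intro m _
  rcases (by decide : ∀ r : F2, r = 0 ∨ r = 1) (coeff m q) with h | h
  · rw [h]
    simp only [monomial_zero, map_zero]
    exact Submodule.zero_mem _
  · rw [h]
    have hd : m = Finsupp.single (0 : Fin 4) (m 0) + (Finsupp.single 1 (m 1)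
        + (Finsupp.single 2 (m 2) + Finsupp.single 3 (m 3))) := by
      ext i; fin_cases i <;> simp [Finsupp.single_apply]
    have he : monomial m (1 : F2) = h0 ^ m 0 * h1 ^ m 1 * vP ^ m 2 * w1 ^ m 3 := by
      conv_lhs => rw [hd]
      rw [monomial_single_add, monomial_single_add, monomial_single_add,
        ← X_pow_eq_monomial]
      rw [h0, h1, vP, w1]; ring
    rw [he]
    exact monomial_mem _ _ _ _

lemma quot_li : LinearIndependent H0W1
    (fun _ : Unit => (Submodule.Quotient.mk (mkKO vP) : KOExt ⧸ TT)) := by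
  rw [Fintype.linearIndependent_iff]
  intro g hg i
  have hg1 : g () • (Submodule.Quotient.mk (mkKO vP) : KOExt ⧸ TT) = 0 := by
    rw [← hg]
    simp
  rw [← Submodule.Quotient.mk_smul, Submodule.Quotient.mk_eq_zero] at hg1
  rw [hsmul_def, mem_TT] at hg1
  have := indep (g ()) hg1
  cases i
  exact this

lemma quot_span : ⊤ ≤ Submodule.span H0W1
    (Set.range fun _ : Unit => (Submodule.Quotient.mk (mkKO vP) : KOExt ⧸ TT)) := by
  rintro y -
  obtain ⟨x, rfl⟩ := TT.mkQ_surjective y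
  have hx : x ∈ TT ⊔ Submodule.span H0W1 {mkKO vP} := by rw [sup_eq_top]; trivial
  rcases Submodule.mem_sup.1 hx with ⟨t, ht, s, hs, rfl⟩
  rcases Submodule.mem_span_singleton.1 hs with ⟨p, rfl⟩
  have h1 : TT.mkQ (t + p • mkKO vP) = p • TT.mkQ (mkKO vP) := by
    rw [map_add, map_smul, Submodule.mkQ_apply,
      (Submodule.Quotient.mk_eq_zero TT).2 ht, zero_add]
  rw [h1]
  exact Submodule.smul_mem _ _ (Submodule.subset_span ⟨(), rfl⟩)

/-- The subalgebra of `R` generated by `h₀, h₁, w₁` equals, as an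
`F₂[w₁]`-submodule, the span of `{h₀^i w₁^k} ∪ {h₁ w₁^k, h₁² w₁^k}`, and the
quotient of `R` by this subalgebra is a free `F₂[h₀, w₁]`-module on one
generator, the image of `v`. -/
theorem koExt_subalgebra_and_quotient :
    ((Algebra.adjoin F2 {mkKO h0, mkKO h1, mkKO w1} : Subalgebra F2 KOExt) : Set KOExt)
      = ↑(Submodule.span (Polynomial F2)
          ({x | ∃ i k : ℕ, x = mkKO (h0 ^ i * w1 ^ k)} ∪
           {x | ∃ k : ℕ, x = mkKO (h1 * w1 ^ k) ∨ x = mkKO (h1 ^ 2 * w1 ^ k)})) ∧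
    ∃ T : Submodule H0W1 KOExt,
      (T : Set KOExt)
        = ((Algebra.adjoin F2 {mkKO h0, mkKO h1, mkKO w1} : Subalgebra F2 KOExt) : Set KOExt) ∧
      ∃ Bq : Module.Basis Unit H0W1 (KOExt ⧸ T),
        Bq () = Submodule.Quotient.mk (mkKO vP) := by
  refine ⟨part1, TT, rfl, Module.Basis.mk quot_li quot_span, ?_⟩
  rw [Module.Basis.mk_apply]
end
end

section
/- In the ring R = F_2[h0, h1, v, w1]/(h0·h1, h1^3, h1·v, v^2 + h0^2·w1), the identities v^2 = h0^2·w1, v^3 = h0^2·v·w1, and v^4 = h0^4·w1^2 hold, and the element v·w1 is not in the subalgebra generated by h0, h1, w1. -/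
noncomputable section

open MvPolynomial

/-- The test map `h0 ↦ 1, h1 ↦ 0, v ↦ X, w1 ↦ X²` into `F₂[X]`. -/
def φ : KOP →ₐ[F2] Polynomial F2 :=
  MvPolynomial.aeval ![1, 0, Polynomial.X, Polynomial.X ^ 2]

lemma φ_ker : ∀ a ∈ koExtIdeal, φ a = 0 := by
  intro a ha
  have h : koExtIdeal ≤ RingHom.ker (φ : KOP →+* Polynomial F2) := by
    rw [koExtIdeal, Ideal.span_le]
    rintro x hx
    simp only [Set.mem_insert_iff, Set.mem_singleton_iff] at hx
    rcases hx with rfl | rfl | rfl | rfl <;>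
      · simp only [SetLike.mem_coe, RingHom.mem_ker, RingHom.coe_coe, map_mul, map_pow, map_add,
          φ, h0, h1, vP, w1, aeval_X]
        simp only [Matrix.cons_val_zero, Matrix.cons_val_one, Matrix.head_cons]
        ring_nf
        try simp [CharTwo.add_self_eq_zero]
  exact h ha

def ψ : KOExt →ₐ[F2] Polynomial F2 := Ideal.Quotient.liftₐ koExtIdeal φ φ_ker

lemma ψ_mk (a : KOP) : ψ (mkKO a) = φ a := rfl

/-- In `R` the identities `v² = h₀²w₁`, `v³ = h₀²vw₁`, `v⁴ = h₀⁴w₁²` hold, and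
`v·w₁` is not in the subalgebra generated by `h₀, h₁, w₁`. -/
theorem koExt_v_identities :
    mkKO (vP ^ 2) = mkKO (h0 ^ 2 * w1) ∧
    mkKO (vP ^ 3) = mkKO (h0 ^ 2 * vP * w1) ∧
    mkKO (vP ^ 4) = mkKO (h0 ^ 4 * w1 ^ 2) ∧
    mkKO (vP * w1) ∉ Algebra.adjoin F2 {mkKO h0, mkKO h1, mkKO w1} := by
  have hmem : vP ^ 2 + h0 ^ 2 * w1 ∈ koExtIdeal :=
    Ideal.subset_span (by simp)
  have key : ∀ a b : KOP, a - b ∈ koExtIdeal → mkKO a = mkKO b := fun a b h =>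
    Ideal.Quotient.eq.mpr h
  refine ⟨key _ _ ?_, key _ _ ?_, key _ _ ?_, ?_⟩
  · rw [CharTwo.sub_eq_add]; exact hmem
  · rw [CharTwo.sub_eq_add]
    have : vP ^ 3 + h0 ^ 2 * vP * w1 = vP * (vP ^ 2 + h0 ^ 2 * w1) := by ring
    rw [this]; exact Ideal.mul_mem_left _ _ hmem
  · rw [CharTwo.sub_eq_add]
    have : vP ^ 4 + h0 ^ 4 * w1 ^ 2 = (vP ^ 2 + h0 ^ 2 * w1) * (vP ^ 2 + h0 ^ 2 * w1) := by
      ring_nf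
      simp [CharTwo.two_eq_zero]
    rw [this]; exact Ideal.mul_mem_left _ _ hmem
  · intro h
    have h2 : ψ (mkKO (vP * w1)) ∈
        (Algebra.adjoin F2 {mkKO h0, mkKO h1, mkKO w1}).map ψ :=
      Subalgebra.mem_map.mpr ⟨_, h, rfl⟩
    rw [AlgHom.map_adjoin] at h2
    have himg : ψ '' {mkKO h0, mkKO h1, mkKO w1} ⊆
        ↑(Algebra.adjoin F2 {(Polynomial.X : Polynomial F2) ^ 2}) := by
      rintro x ⟨y, hy, rfl⟩
      simp only [Set.mem_insert_iff, Set.mem_singleton_iff] at hy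
      rcases hy with rfl | rfl | rfl
      · show ψ (mkKO h0) ∈ _
        rw [ψ_mk]
        have : φ h0 = 1 := by simp [φ, h0, aeval_X]
        rw [this]; exact Subalgebra.one_mem _
      · show ψ (mkKO h1) ∈ _
        rw [ψ_mk]
        have : φ h1 = 0 := by simp [φ, h1, aeval_X]
        rw [this]; exact Subalgebra.zero_mem _
      · show ψ (mkKO w1) ∈ _
        rw [ψ_mk]
        have : φ w1 = Polynomial.X ^ 2 := by simp [φ, w1, aeval_X]
        rw [this]; exact Algebra.subset_adjoin rfl
    have h3 : ψ (mkKO (vP * w1)) ∈ Algebra.adjoin F2 {(Polynomial.X : Polynomial F2) ^ 2} :=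
      Algebra.adjoin_le (by exact_mod_cast himg) h2
    have h4 : ψ (mkKO (vP * w1)) = Polynomial.X ^ 3 := by
      rw [ψ_mk]
      simp [φ, vP, w1, aeval_X]
      ring
    rw [h4, Algebra.adjoin_singleton_eq_range_aeval] at h3
    obtain ⟨p, hp⟩ := h3
    have hexp : Polynomial.expand F2 2 p = Polynomial.X ^ 3 := by
      rw [Polynomial.expand_eq_comp_X_pow, Polynomial.comp_eq_aeval]
      exact hp
    have := congrArg (fun q => Polynomial.coeff q 3) hexp
    simp only [Polynomial.coeff_expand (by norm_num : 0 < 2)] at this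
    norm_num [Polynomial.coeff_X_pow] at this
end
end

section
/- Define S ⊆ ℕ × ℕ to be the set of pairs (n, s) of the form (8m, 4m), (8m+1, 4m+1), (8m+2, 4m+2), (8m+2, 4m+1), (8m+3, 4m+2), (8m+4, 4m+3), (8m+3, 4m+1), (8m+7, 4m+2), (8m+8, 4m+3), (8m+9, 4m+4), (8m+9, 4m+3), (8m+10, 4m+4) for m ≥ 0. Then there is no pair of elements (n, s) and (n-1, s') in S with s' ≥ s + 3. -/
/-- The set of (stem, filtration) bidegrees of the `F₂`-basis of `E₃(j/2)`. -/
def jmod2Bidegrees : Set (ℕ × ℕ) :=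
  {q | ∃ m : ℕ,
    q = (8*m, 4*m) ∨ q = (8*m+1, 4*m+1) ∨ q = (8*m+2, 4*m+2) ∨
    q = (8*m+2, 4*m+1) ∨ q = (8*m+3, 4*m+2) ∨ q = (8*m+4, 4*m+3) ∨
    q = (8*m+3, 4*m+1) ∨ q = (8*m+7, 4*m+2) ∨ q = (8*m+8, 4*m+3) ∨
    q = (8*m+9, 4*m+4) ∨ q = (8*m+9, 4*m+3) ∨ q = (8*m+10, 4*m+4)}

/-- There is no pair of elements `(n, s)` and `(n-1, s')` in `S` with `s' ≥ s + 3`. -/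
theorem no_differential_bidegrees :
    ¬ ∃ n s s' : ℕ, (n, s) ∈ jmod2Bidegrees ∧ (n - 1, s') ∈ jmod2Bidegrees ∧
      s + 3 ≤ s' := by
  rintro ⟨n, s, s', ⟨m, h⟩, ⟨m', h'⟩, hle⟩
  simp only [jmod2Bidegrees, Set.mem_setOf_eq, Prod.mk.injEq] at h h'
  omega
end
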